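/- arXiv:1006.4465 — 3 statements merged into one kernel-verified Lean document; each statement's English description precedes it below -/
import Mathlib

section
/- Let (S_n) be real random variables with S_n → ∞ almost surely and θ > 0 such that E[e^{-θ S_n}] → q ∈ (0, ∞). Then for every φ > θ, E[e^{-φ S_n}] → ∞ as n → ∞. -/
open MeasureTheory Real Filter Topology

theorem expectation_tendsto_top_of_gt_theta
    {Ω : Type*} [MeasurableSpace Ω] {μ : Measure Ω} [IsProbabilityMeasure μ]
    (S : ℕ → Ω → ℝ) (hSmeas : ∀ n, Measurable (S n))
    (hS : ∀ᵐ ω ∂μ, Tendsto (fun n => S n ω) atTop atTop)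
    (θ : ℝ) (hθ : 0 < θ) (q : ℝ) (hq : 0 < q)
    (hintθ : ∀ n, Integrable (fun ω => exp (-θ * S n ω)) μ)
    (hlim : Tendsto (fun n => ∫ ω, exp (-θ * S n ω) ∂μ) atTop (𝓝 q)) :
    ∀ φ : ℝ, θ < φ →
      Tendsto (fun n => ∫⁻ ω, ENNReal.ofReal (exp (-φ * S n ω)) ∂μ)
        atTop (𝓝 ⊤) := by
  intro φ hφ
  rw [ENNReal.tendsto_nhds_top_iff_nnreal]
  intro M
  have hδ : (0:ℝ) < φ - θ := sub_pos.2 hφ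
  set δ := φ - θ with hδdef
  obtain ⟨K, hK⟩ : ∃ K : ℝ, (M:ℝ) < exp (δ * K) * (q/2) := by
    refine ⟨Real.log (((M:ℝ) + 1) / (q/2)) / δ, ?_⟩
    have hM0 : (0:ℝ) ≤ (M:ℝ) := M.coe_nonneg
    have hx : (0:ℝ) < ((M:ℝ) + 1) / (q/2) := by positivity
    rw [mul_div_cancel₀ _ (ne_of_gt hδ), Real.exp_log hx, div_mul_cancel₀]
    · linarith
    · positivity
  set g : ℕ → Ω → ℝ := fun n ω => if S n ω ≤ -K then exp (-θ * S n ω) else 0 with hgdef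
  set h : ℕ → Ω → ℝ := fun n ω => if S n ω ≤ -K then 0 else exp (-θ * S n ω) with hhdef
  have hmeas_h : ∀ n, Measurable (h n) := fun n =>
    Measurable.ite (measurableSet_le (hSmeas n) measurable_const) measurable_const
      (((hSmeas n).const_mul (-θ)).exp)
  have hmeas_g : ∀ n, Measurable (g n) := fun n =>
    Measurable.ite (measurableSet_le (hSmeas n) measurable_const)
      (((hSmeas n).const_mul (-θ)).exp) measurable_const
  have hh_nonneg : ∀ n ω, 0 ≤ h n ω := by
    intro n ω; simp only [hhdef]; split <;> positivity
  have hg_nonneg : ∀ n ω, 0 ≤ g n ω := by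
    intro n ω; simp only [hgdef]; split <;> positivity
  have hh_le : ∀ n ω, h n ω ≤ exp (-θ * S n ω) := by
    intro n ω; simp only [hhdef]; split
    · positivity
    · exact le_rfl
  have hg_le : ∀ n ω, g n ω ≤ exp (-θ * S n ω) := by
    intro n ω; simp only [hgdef]; split
    · exact le_rfl
    · positivity
  have hint_h : ∀ n, Integrable (h n) μ := by
    intro n
    refine (hintθ n).mono (hmeas_h n).aestronglyMeasurable (Filter.Eventually.of_forall ?_)
    intro ω
    rw [Real.norm_eq_abs, Real.norm_eq_abs, abs_of_nonneg (hh_nonneg n ω),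
      abs_of_nonneg (by positivity)]
    exact hh_le n ω
  have hint_g : ∀ n, Integrable (g n) μ := by
    intro n
    refine (hintθ n).mono (hmeas_g n).aestronglyMeasurable (Filter.Eventually.of_forall ?_)
    intro ω
    rw [Real.norm_eq_abs, Real.norm_eq_abs, abs_of_nonneg (hg_nonneg n ω),
      abs_of_nonneg (by positivity)]
    exact hg_le n ω
  -- ∫ h n → 0 by dominated convergence
  have hh0 : Tendsto (fun n => ∫ ω, h n ω ∂μ) atTop (𝓝 0) := by
    have hb : ∀ n, ∀ᵐ ω ∂μ, ‖h n ω‖ ≤ exp (θ * K) := by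
      intro n
      refine Filter.Eventually.of_forall fun ω => ?_
      rw [Real.norm_eq_abs, abs_of_nonneg (hh_nonneg n ω)]
      simp only [hhdef]
      split_ifs with hcond
      · positivity
      · push_neg at hcond
        exact Real.exp_le_exp.2 (by nlinarith)
    have hl : ∀ᵐ ω ∂μ, Tendsto (fun n => h n ω) atTop (𝓝 0) := by
      filter_upwards [hS] with ω hω
      have h1 : Tendsto (fun n => -θ * S n ω) atTop atBot :=
        (tendsto_const_mul_atBot_of_neg (neg_lt_zero.2 hθ)).2 hω
      have hexp : Tendsto (fun n => exp (-θ * S n ω)) atTop (𝓝 0) :=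
        Real.tendsto_exp_atBot.comp h1
      exact squeeze_zero (fun n => hh_nonneg n ω) (fun n => hh_le n ω) hexp
    have := tendsto_integral_of_dominated_convergence (μ := μ)
      (F := fun n ω => h n ω) (f := fun _ => (0:ℝ)) (bound := fun _ => exp (θ * K))
      (fun n => (hmeas_h n).aestronglyMeasurable) (integrable_const _) hb hl
    simpa using this
  have hsum : ∀ n ω, g n ω = exp (-θ * S n ω) - h n ω := by
    intro n ω; simp only [hgdef, hhdef]; split <;> ring
  have hgq : Tendsto (fun n => ∫ ω, g n ω ∂μ) atTop (𝓝 q) := by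
    have : (fun n => ∫ ω, g n ω ∂μ)
        = fun n => (∫ ω, exp (-θ * S n ω) ∂μ) - ∫ ω, h n ω ∂μ := by
      funext n
      rw [← integral_sub (hintθ n) (hint_h n)]
      exact integral_congr_ae (Filter.Eventually.of_forall fun ω => hsum n ω)
    rw [this]
    simpa using hlim.sub hh0
  have hev : ∀ᶠ n in atTop, q / 2 < ∫ ω, g n ω ∂μ :=
    hgq.eventually (eventually_gt_nhds (by linarith))
  filter_upwards [hev] with n hn
  have hofg : ENNReal.ofReal (∫ ω, g n ω ∂μ) = ∫⁻ ω, ENNReal.ofReal (g n ω) ∂μ :=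
    MeasureTheory.ofReal_integral_eq_lintegral_ofReal (hint_g n)
      (Filter.Eventually.of_forall fun ω => hg_nonneg n ω)
  have hpt : ∀ ω, exp (δ * K) * g n ω ≤ exp (-φ * S n ω) := by
    intro ω
    simp only [hgdef]
    split_ifs with hcond
    · rw [← Real.exp_add]
      apply Real.exp_le_exp.2
      have h2 : K ≤ -(S n ω) := by linarith
      have h3 : δ * K ≤ δ * (-(S n ω)) := mul_le_mul_of_nonneg_left h2 hδ.le
      have h4 : δ * (-(S n ω)) = -φ * S n ω + θ * S n ω := by rw [hδdef]; ring
      linarith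
    · simp only [mul_zero]; positivity
  calc (M : ENNReal) = ENNReal.ofReal (M:ℝ) := (ENNReal.ofReal_coe_nnreal (p := M)).symm
    _ < ENNReal.ofReal (exp (δ * K) * (q/2)) := by
        apply (ENNReal.ofReal_lt_ofReal_iff (by positivity)).2 hK
    _ ≤ ENNReal.ofReal (exp (δ * K) * ∫ ω, g n ω ∂μ) := by
        apply ENNReal.ofReal_le_ofReal
        exact mul_le_mul_of_nonneg_left hn.le (by positivity)
    _ = ENNReal.ofReal (exp (δ * K)) * ENNReal.ofReal (∫ ω, g n ω ∂μ) :=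
        ENNReal.ofReal_mul (by positivity)
    _ = ENNReal.ofReal (exp (δ * K)) * ∫⁻ ω, ENNReal.ofReal (g n ω) ∂μ := by rw [hofg]
    _ = ∫⁻ ω, ENNReal.ofReal (exp (δ * K)) * ENNReal.ofReal (g n ω) ∂μ :=
        (lintegral_const_mul _ ((hmeas_g n).ennreal_ofReal)).symm
    _ = ∫⁻ ω, ENNReal.ofReal (exp (δ * K) * g n ω) ∂μ := by
        congr 1; funext ω; rw [← ENNReal.ofReal_mul (by positivity)]
    _ ≤ ∫⁻ ω, ENNReal.ofReal (exp (-φ * S n ω)) ∂μ :=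
        lintegral_mono fun ω => ENNReal.ofReal_le_ofReal (hpt ω)
end

section
/- Let (S_n) be real random variables with S_n → ∞ almost surely. Then there exists at most one θ > 0 such that lim_{n→∞} E[e^{-θ S_n}] exists and lies in (0, ∞). -/
open MeasureTheory Real Filter Topology

/-- Auxiliary lemma: if `θ₁ < θ₂` and both Laplace-type limits are positive, contradiction. -/
lemma theta_unique_aux
    {Ω : Type*} [MeasurableSpace Ω] {μ : Measure Ω} [IsProbabilityMeasure μ]
    (S : ℕ → Ω → ℝ) (hSmeas : ∀ n, Measurable (S n))
    (hS : ∀ᵐ ω ∂μ, Tendsto (fun n => S n ω) atTop atTop)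
    (θ₁ θ₂ : ℝ) (hθ₁ : 0 < θ₁) (hθ₂ : 0 < θ₂)
    (q₁ q₂ : ℝ) (hq₁ : 0 < q₁) (hq₂ : 0 < q₂)
    (hint₁ : ∀ n, Integrable (fun ω => exp (-θ₁ * S n ω)) μ)
    (hint₂ : ∀ n, Integrable (fun ω => exp (-θ₂ * S n ω)) μ)
    (hlim₁ : Tendsto (fun n => ∫ ω, exp (-θ₁ * S n ω) ∂μ) atTop (𝓝 q₁))
    (hlim₂ : Tendsto (fun n => ∫ ω, exp (-θ₂ * S n ω) ∂μ) atTop (𝓝 q₂))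
    (hlt : θ₁ < θ₂) : False := by
  set p : ℝ := θ₁ / θ₂ with hp_def
  have hp : 0 < p := div_pos hθ₁ hθ₂
  have hp1 : p < 1 := (div_lt_one hθ₂).2 hlt
  have hp1' : p - 1 < 0 := by linarith
  -- rewrite the θ₁ exponential as a power of the θ₂ exponential
  have key : ∀ n ω, exp (-θ₁ * S n ω) = (exp (-θ₂ * S n ω)) ^ p := by
    intro n ω
    rw [← Real.exp_mul]
    congr 1
    field_simp [hp_def]
    have hθp : θ₂ * p = θ₁ := by rw [hp_def]; field_simp
    linear_combination (S n ω) * hθp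
  -- measurability of the θ₂ exponential
  have hXmeas : ∀ n, Measurable (fun ω => exp (-θ₂ * S n ω)) := fun n =>
    Real.measurable_exp.comp ((hSmeas n).const_mul (-θ₂))
  -- main claim: the θ₁ integrals tend to 0
  have h0 : Tendsto (fun n => ∫ ω, exp (-θ₁ * S n ω) ∂μ) atTop (𝓝 0) := by
    rw [Metric.tendsto_nhds]
    intro ε hε
    set t : ℝ := ε / (2 * (q₂ + 1)) with ht_def
    have ht : 0 < t := by positivity
    set M : ℝ := t ^ (p - 1)⁻¹ with hM_def
    have hM : 0 < M := Real.rpow_pos_of_pos ht _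
    have hMp : M ^ (p - 1) = t := Real.rpow_inv_rpow ht.le hp1'.ne
    have htq : t * q₂ < ε / 2 := by
      have h1 : t * q₂ < t * (q₂ + 1) := by nlinarith
      have h2 : t * (q₂ + 1) = ε / 2 := by
        rw [ht_def]; field_simp
      linarith
    -- the truncated integrals tend to 0 by dominated convergence
    have hb : Tendsto (fun n => ∫ ω, (min (exp (-θ₂ * S n ω)) M) ^ p ∂μ) atTop (𝓝 0) := by
      have := MeasureTheory.tendsto_integral_of_dominated_convergence
        (F := fun n ω => (min (exp (-θ₂ * S n ω)) M) ^ p) (f := fun _ => (0 : ℝ))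
        (bound := fun _ => M ^ p)
        (fun n => ((Real.continuous_rpow_const hp.le).measurable.comp ((hXmeas n).min measurable_const)).aestronglyMeasurable)
        (integrable_const _)
        (by
          intro n
          filter_upwards with ω
          have h1 : (0 : ℝ) ≤ min (exp (-θ₂ * S n ω)) M := le_min (exp_pos _).le hM.le
          rw [Real.norm_eq_abs, abs_of_nonneg (Real.rpow_nonneg h1 _)]
          exact Real.rpow_le_rpow h1 (min_le_right _ _) hp.le)
        (by
          filter_upwards [hS] with ω hω
          have h1 : Tendsto (fun n => exp (-θ₂ * S n ω)) atTop (𝓝 0) :=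
            Real.tendsto_exp_atBot.comp ((tendsto_const_mul_atBot_of_neg (by linarith : -θ₂ < (0:ℝ))).2 hω)
          have h2 : Tendsto (fun n => min (exp (-θ₂ * S n ω)) M) atTop (𝓝 0) := by
            have := h1.min (tendsto_const_nhds (x := M))
            rwa [min_eq_left hM.le] at this
          have h3 := ((Real.continuousAt_rpow_const 0 p (Or.inr hp.le)).tendsto).comp h2
          simpa [Real.zero_rpow hp.ne', Function.comp_def] using h3)
      simpa using this
    have hc : Tendsto (fun n => M ^ (p - 1) * ∫ ω, exp (-θ₂ * S n ω) ∂μ) atTop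
        (𝓝 (M ^ (p - 1) * q₂)) := hlim₂.const_mul _
    have hcb : M ^ (p - 1) * q₂ < ε / 2 := by rw [hMp]; exact htq
    filter_upwards [hb.eventually_lt_const (by linarith : (0:ℝ) < ε / 2),
      hc.eventually_lt_const hcb] with n hbn hcn
    have hnonneg : 0 ≤ ∫ ω, exp (-θ₁ * S n ω) ∂μ :=
      integral_nonneg fun ω => (exp_pos _).le
    rw [Real.dist_eq, sub_zero, abs_of_nonneg hnonneg]
    -- pointwise bound
    have hpt : ∀ ω, exp (-θ₁ * S n ω) ≤
        (min (exp (-θ₂ * S n ω)) M) ^ p + M ^ (p - 1) * exp (-θ₂ * S n ω) := by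
      intro ω
      set x : ℝ := exp (-θ₂ * S n ω) with hx_def
      have hx : 0 < x := exp_pos _
      rw [key n ω, ← hx_def]
      rcases le_or_gt x M with h | h
      · rw [min_eq_left h]
        exact le_add_of_nonneg_right (mul_nonneg (Real.rpow_nonneg hM.le _) hx.le)
      · rw [min_eq_right h.le]
        have h2 : x ^ (p - 1) ≤ M ^ (p - 1) :=
          Real.rpow_le_rpow_of_nonpos hM h.le hp1'.le
        have h3 : x ^ p = x ^ (p - 1) * x := by
          rw [← Real.rpow_add_one hx.ne' (p - 1)]; ring_nf
        have h4 : x ^ (p - 1) * x ≤ M ^ (p - 1) * x :=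
          mul_le_mul_of_nonneg_right h2 hx.le
        have h5 : (0 : ℝ) ≤ M ^ p := Real.rpow_nonneg hM.le _
        linarith [h3 ▸ h4]
    -- integrability of both sides
    have hintL : Integrable (fun ω => exp (-θ₁ * S n ω)) μ := hint₁ n
    have hintmin : Integrable (fun ω => (min (exp (-θ₂ * S n ω)) M) ^ p) μ := by
      apply (integrable_const (M ^ p)).mono'
        ((Real.continuous_rpow_const hp.le).measurable.comp ((hXmeas n).min measurable_const)).aestronglyMeasurable
      filter_upwards with ω
      have h1 : (0 : ℝ) ≤ min (exp (-θ₂ * S n ω)) M := le_min (exp_pos _).le hM.le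
      simp only [Function.comp_apply]
      rw [Real.norm_eq_abs, abs_of_nonneg (Real.rpow_nonneg h1 _)]
      exact Real.rpow_le_rpow h1 (min_le_right _ _) hp.le
    have hintR : Integrable
        (fun ω => (min (exp (-θ₂ * S n ω)) M) ^ p + M ^ (p - 1) * exp (-θ₂ * S n ω)) μ :=
      hintmin.add ((hint₂ n).const_mul _)
    calc ∫ ω, exp (-θ₁ * S n ω) ∂μ
        ≤ ∫ ω, ((min (exp (-θ₂ * S n ω)) M) ^ p + M ^ (p - 1) * exp (-θ₂ * S n ω)) ∂μ :=
          integral_mono hintL hintR hpt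
      _ = (∫ ω, (min (exp (-θ₂ * S n ω)) M) ^ p ∂μ)
          + ∫ ω, M ^ (p - 1) * exp (-θ₂ * S n ω) ∂μ :=
          integral_add hintmin ((hint₂ n).const_mul _)
      _ = (∫ ω, (min (exp (-θ₂ * S n ω)) M) ^ p ∂μ)
          + M ^ (p - 1) * ∫ ω, exp (-θ₂ * S n ω) ∂μ := by
          rw [integral_const_mul]
      _ < ε / 2 + ε / 2 := add_lt_add hbn hcn
      _ = ε := by ring
  exact absurd (tendsto_nhds_unique hlim₁ h0) hq₁.ne'

theorem theta_unique_assumption_one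
    {Ω : Type*} [MeasurableSpace Ω] {μ : Measure Ω} [IsProbabilityMeasure μ]
    (S : ℕ → Ω → ℝ) (hSmeas : ∀ n, Measurable (S n))
    (hS : ∀ᵐ ω ∂μ, Tendsto (fun n => S n ω) atTop atTop)
    (θ₁ θ₂ : ℝ) (hθ₁ : 0 < θ₁) (hθ₂ : 0 < θ₂)
    (q₁ q₂ : ℝ) (hq₁ : 0 < q₁) (hq₂ : 0 < q₂)
    (hint₁ : ∀ n, Integrable (fun ω => exp (-θ₁ * S n ω)) μ)
    (hint₂ : ∀ n, Integrable (fun ω => exp (-θ₂ * S n ω)) μ)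
    (hlim₁ : Tendsto (fun n => ∫ ω, exp (-θ₁ * S n ω) ∂μ) atTop (𝓝 q₁))
    (hlim₂ : Tendsto (fun n => ∫ ω, exp (-θ₂ * S n ω) ∂μ) atTop (𝓝 q₂)) :
    θ₁ = θ₂ := by
  rcases lt_trichotomy θ₁ θ₂ with h | h | h
  · exact absurd (theta_unique_aux S hSmeas hS θ₁ θ₂ hθ₁ hθ₂ q₁ q₂ hq₁ hq₂
      hint₁ hint₂ hlim₁ hlim₂ h) id
  · exact h
  · exact absurd (theta_unique_aux S hSmeas hS θ₂ θ₁ hθ₂ hθ₁ q₂ q₁ hq₂ hq₁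
      hint₂ hint₁ hlim₂ hlim₁ h) id
end

section
/- Let (Ω, F) be a measurable space and (P_n) a sequence of probability measures on F such that P(A) := lim_{n→∞} P_n(A) exists for every A ∈ F. Then P is a probability measure on (Ω, F). -/
open MeasureTheory Filter Topology Set ENNReal NNReal
open scoped symmDiff

namespace VHSaux
variable {Ω : Type*} [MeasurableSpace Ω]

def MA (μ : Measure Ω) := {A : Set Ω // MeasurableSet A}

noncomputable instance (μ : Measure Ω) : PseudoEMetricSpace (MA μ) where
  edist A B := μ (A.1 ∆ B.1)
  edist_self A := by simp [symmDiff_self]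
  edist_comm A B := by simp [symmDiff_comm]
  edist_triangle A B C :=
    le_trans (measure_mono (symmDiff_triangle A.1 B.1 C.1)) (measure_union_le _ _)

lemma MA.edist_def {μ : Measure Ω} (A B : MA μ) : edist A B = μ (A.1 ∆ B.1) := rfl

instance (μ : Measure Ω) [IsFiniteMeasure μ] : CompleteSpace (MA μ) := by
  apply EMetric.complete_of_convergent_controlled_sequences (fun n => 2⁻¹ ^ n)
    (fun n => ENNReal.pow_pos (by norm_num) n)
  intro u hu
  set A : Set Ω := ⋂ N, ⋃ n, ⋃ _h : N ≤ n, (u n).1 with hA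
  have hAm : MeasurableSet A := .iInter fun N => .iUnion fun n => .iUnion fun _ => (u n).2
  have key : ∀ N, (u N).1 ∆ A ⊆ ⋃ k, ((u (N + k)).1 ∆ (u (N + k + 1)).1) := by
    intro N x hx
    by_contra hxc
    simp only [mem_iUnion, not_exists] at hxc
    have hstep : ∀ k, x ∈ (u (N + k)).1 ↔ x ∈ (u (N + k + 1)).1 := by
      intro k
      have := hxc k
      rw [Set.mem_symmDiff] at this
      tauto
    have heq : ∀ k, x ∈ (u (N + k)).1 ↔ x ∈ (u N).1 := by
      intro k
      induction k with
      | zero => rfl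
      | succ k ih => rw [show N + (k+1) = N + k + 1 from rfl, ← hstep k]; exact ih
    rw [Set.mem_symmDiff] at hx
    rcases hx with ⟨hxu, hxA⟩ | ⟨hxA, hxu⟩
    · apply hxA
      rw [hA, mem_iInter]
      intro M
      simp only [mem_iUnion]
      exact ⟨N + M, Nat.le_add_left M N, (heq M).2 hxu⟩
    · rw [hA, mem_iInter] at hxA
      obtain ⟨n, hn, hxn⟩ := by simpa only [mem_iUnion] using hxA N
      exact hxu ((heq (n - N)).1 (by rwa [Nat.add_sub_cancel' hn]))
  have hm : ∀ N, edist (u N) (⟨A, hAm⟩ : MA μ) ≤ 2⁻¹ ^ N * 2 := by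
    intro N
    show μ ((u N).1 ∆ A) ≤ 2⁻¹ ^ N * 2
    calc μ ((u N).1 ∆ A) ≤ μ (⋃ k, ((u (N + k)).1 ∆ (u (N + k + 1)).1)) :=
          measure_mono (key N)
      _ ≤ ∑' k, μ ((u (N + k)).1 ∆ (u (N + k + 1)).1) := measure_iUnion_le _
      _ ≤ ∑' k : ℕ, (2⁻¹ : ℝ≥0∞) ^ (N + k) := by
          refine ENNReal.tsum_le_tsum fun k => ?_
          exact le_of_lt (hu (N + k) (N + k) (N + k + 1) le_rfl (Nat.le_succ _))
      _ = 2⁻¹ ^ N * 2 := by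
          simp_rw [pow_add]
          rw [ENNReal.tsum_mul_left, ENNReal.tsum_geometric]
          norm_num
  refine ⟨⟨A, hAm⟩, ?_⟩
  refine EMetric.tendsto_atTop.2 ?_
  intro ε hε
  have htend : Tendsto (fun N : ℕ => (2⁻¹ : ℝ≥0∞) ^ N * 2) atTop (𝓝 0) := by
    have h1 : Tendsto (fun N : ℕ => (2⁻¹ : ℝ≥0∞) ^ N) atTop (𝓝 0) :=
      ENNReal.tendsto_pow_atTop_nhds_zero_of_lt_one (by norm_num)
    simpa using ENNReal.Tendsto.mul_const h1 (Or.inr (by norm_num))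
  obtain ⟨N, hN⟩ := (ENNReal.nhds_zero_basis.tendsto_right_iff.1 htend ε hε).exists
  refine ⟨N, fun n hn => lt_of_le_of_lt ((hm n).trans ?_) hN⟩
  exact mul_le_mul_left (pow_le_pow_of_le_one zero_le (by norm_num) hn) 2



-- |ν A - ν B| ≤ ν (A ∆ B) in toReal form
lemma abs_toReal_sub_le (ν : Measure Ω) [IsFiniteMeasure ν] (A B : Set Ω)
    (hA : MeasurableSet A) (hB : MeasurableSet B) :
    |(ν A).toReal - (ν B).toReal| ≤ (ν (A ∆ B)).toReal := by
  have h1 : ν A ≤ ν B + ν (A ∆ B) := by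
    refine le_trans (measure_mono ?_) (measure_union_le _ _)
    intro x hx; by_cases hxB : x ∈ B
    · exact Or.inl hxB
    · exact Or.inr (Set.mem_symmDiff.2 (Or.inl ⟨hx, hxB⟩))
  have h2 : ν B ≤ ν A + ν (A ∆ B) := by
    refine le_trans (measure_mono ?_) (measure_union_le _ _)
    intro x hx; by_cases hxA : x ∈ A
    · exact Or.inl hxA
    · exact Or.inr (Set.mem_symmDiff.2 (Or.inr ⟨hx, hxA⟩))
  rw [abs_sub_le_iff]
  constructor
  · have := ENNReal.toReal_mono (by finiteness) h1
    rw [ENNReal.toReal_add (by finiteness) (by finiteness)] at this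
    linarith
  · have := ENNReal.toReal_mono (by finiteness) h2
    rw [ENNReal.toReal_add (by finiteness) (by finiteness)] at this
    linarith



lemma lipschitz_aux (μ ν : Measure Ω) [IsFiniteMeasure ν] (c : ℝ≥0)
    (hc : ∀ S : Set Ω, MeasurableSet S → ν S ≤ (c : ℝ≥0∞) * μ S) :
    LipschitzWith c (fun A : MA μ => (ν A.1).toReal) := by
  intro A B
  rw [edist_dist, Real.dist_eq, MA.edist_def]
  calc ENNReal.ofReal |(ν A.1).toReal - (ν B.1).toReal|
      ≤ ENNReal.ofReal ((ν (A.1 ∆ B.1)).toReal) :=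
        ENNReal.ofReal_le_ofReal (abs_toReal_sub_le ν A.1 B.1 A.2 B.2)
    _ = ν (A.1 ∆ B.1) := ENNReal.ofReal_toReal (by finiteness)
    _ ≤ c * μ (A.1 ∆ B.1) := hc _ (A.2.symmDiff B.2)

/-- Key Baire-category lemma (heart of Vitali–Hahn–Saks). -/
lemma uniform_small (P : ℕ → Measure Ω) (hP : ∀ n, IsProbabilityMeasure (P n))
    (μ : Measure Ω) [IsFiniteMeasure μ] (c : ℕ → ℝ≥0) (hcm : Monotone c)
    (hc : ∀ n, ∀ S : Set Ω, MeasurableSet S → P n S ≤ (c n : ℝ≥0∞) * μ S)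
    (hconv : ∀ A : Set Ω, MeasurableSet A →
      ∃ l : ℝ, Tendsto (fun n => (P n A).toReal) atTop (𝓝 l))
    {ε : ℝ} (hε : 0 < ε) :
    ∃ (N : ℕ) (r : ℝ≥0∞), 0 < r ∧ ∀ B : Set Ω, MeasurableSet B → μ B < r →
      ∀ n, (P n B).toReal ≤ ((c N : ℝ≥0∞) * μ B).toReal + 2 * ε := by
  haveI : Nonempty (MA μ) := ⟨⟨∅, MeasurableSet.empty⟩⟩
  set f : ℕ → MA μ → ℝ := fun n A => (P n A.1).toReal with hf
  have hfc : ∀ n, Continuous (f n) := fun n => (lipschitz_aux μ (P n) (c n) (hc n)).continuous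
  set F : ℕ → Set (MA μ) := fun N => {A | ∀ m n, N ≤ m → N ≤ n → |f m A - f n A| ≤ ε} with hF
  have hFc : ∀ N, IsClosed (F N) := by
    intro N
    have : F N = ⋂ m, ⋂ n, ⋂ _ : N ≤ m, ⋂ _ : N ≤ n, {A | |f m A - f n A| ≤ ε} := by
      ext A; simp [hF]
    rw [this]
    exact isClosed_iInter fun m => isClosed_iInter fun n => isClosed_iInter fun _ =>
      isClosed_iInter fun _ => isClosed_le (((hfc m).sub (hfc n)).abs) continuous_const
  have hFU : ⋃ N, F N = univ := by
    ext A
    simp only [mem_iUnion, mem_univ, iff_true]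
    obtain ⟨l, hl⟩ := hconv A.1 A.2
    obtain ⟨N, hN⟩ := Metric.cauchySeq_iff.1 hl.cauchySeq ε hε
    exact ⟨N, fun m n hm hn => le_of_lt (by simpa [Real.dist_eq] using hN m hm n hn)⟩
  obtain ⟨N, hNne⟩ := nonempty_interior_of_iUnion_of_closed hFc hFU
  obtain ⟨A₀, hA₀⟩ := hNne
  obtain ⟨r, hr, hball⟩ := EMetric.mem_nhds_iff.1 (mem_interior_iff_mem_nhds.1 hA₀)
  refine ⟨N, r, hr, fun B hB hBr n => ?_⟩
  have hμB : (c N : ℝ≥0∞) * μ B ≠ ⊤ := ENNReal.mul_ne_top ENNReal.coe_ne_top (by finiteness)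
  by_cases hn : N ≤ n
  · set A₁ : MA μ := ⟨A₀.1 ∪ B, A₀.2.union hB⟩
    set A₂ : MA μ := ⟨A₀.1 \ B, A₀.2.diff hB⟩
    have h1 : A₁ ∈ F N := by
      apply hball
      rw [EMetric.mem_ball, MA.edist_def]
      refine lt_of_le_of_lt (measure_mono ?_) hBr
      intro x hx; rw [Set.mem_symmDiff] at hx; rcases hx with ⟨h, h'⟩ | ⟨h, h'⟩
      · rcases h with h | h; · exact absurd h h'
        exact h
      · exact absurd (Or.inl h) h'
    have h2 : A₂ ∈ F N := by
      apply hball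
      rw [EMetric.mem_ball, MA.edist_def]
      refine lt_of_le_of_lt (measure_mono ?_) hBr
      intro x hx; rw [Set.mem_symmDiff] at hx; rcases hx with ⟨h, h'⟩ | ⟨h, h'⟩
      · exact absurd h.1 h'
      · by_contra hxB; exact h' ⟨h, hxB⟩
    have hsplit : ∀ m, f m A₁ = f m A₂ + (P m B).toReal := by
      intro m
      have hd : Disjoint (A₀.1 \ B) B := Set.disjoint_sdiff_left
      have hu : A₀.1 ∪ B = (A₀.1 \ B) ∪ B := by
        ext x; by_cases hxB : x ∈ B <;> simp [hxB]
      have : P m (A₀.1 ∪ B) = P m (A₀.1 \ B) + P m B := by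
        rw [hu, measure_union hd hB]
      show (P m (A₀.1 ∪ B)).toReal = (P m (A₀.1 \ B)).toReal + (P m B).toReal
      rw [this, ENNReal.toReal_add (by finiteness) (by finiteness)]
    have e1 : |f n A₁ - f N A₁| ≤ ε := h1 n N hn le_rfl
    have e2 : |f n A₂ - f N A₂| ≤ ε := h2 n N hn le_rfl
    have eN : (P N B).toReal ≤ ((c N : ℝ≥0∞) * μ B).toReal :=
      ENNReal.toReal_mono hμB (hc N B hB)
    have := hsplit n
    have := hsplit N
    rw [abs_le] at e1 e2
    nlinarith [e1.1, e1.2, e2.1, e2.2]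
  · push_neg at hn
    calc (P n B).toReal ≤ ((c n : ℝ≥0∞) * μ B).toReal :=
          ENNReal.toReal_mono (ENNReal.mul_ne_top ENNReal.coe_ne_top (by finiteness)) (hc n B hB)
      _ ≤ ((c N : ℝ≥0∞) * μ B).toReal := by
          apply ENNReal.toReal_mono hμB
          exact mul_le_mul_left (ENNReal.coe_le_coe.2 (hcm hn.le)) _
      _ ≤ ((c N : ℝ≥0∞) * μ B).toReal + 2 * ε := by linarith

end VHSaux

theorem setwise_limit_is_probability_measure
    {Ω : Type*} [MeasurableSpace Ω]
    (P : ℕ → Measure Ω) (hP : ∀ n, IsProbabilityMeasure (P n))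
    (L : Set Ω → ENNReal)
    (hlim : ∀ A : Set Ω, MeasurableSet A → Tendsto (fun n => P n A) atTop (𝓝 (L A))) :
    ∃ Q : Measure Ω, IsProbabilityMeasure Q ∧
      ∀ A : Set Ω, MeasurableSet A → Q A = L A := by
  classical
  -- the dominating measure
  set μ : Measure Ω := Measure.sum (fun n => ((2 : ℝ≥0∞)⁻¹ ^ (n + 1)) • P n) with hμ
  haveI : IsFiniteMeasure μ := by
    constructor
    rw [hμ, Measure.sum_apply _ MeasurableSet.univ]
    have : ∀ n : ℕ, (((2 : ℝ≥0∞)⁻¹ ^ (n + 1)) • P n) Set.univ = (2 : ℝ≥0∞)⁻¹ ^ (n + 1) := by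
      intro n; rw [Measure.smul_apply, smul_eq_mul, measure_univ, mul_one]
    rw [tsum_congr this]
    have : ∑' n : ℕ, (2 : ℝ≥0∞)⁻¹ ^ (n + 1) = 1 := by
      simp_rw [pow_succ']
      rw [ENNReal.tsum_mul_left, ENNReal.tsum_geometric, ENNReal.one_sub_inv_two,
        ENNReal.mul_inv_cancel (ENNReal.inv_ne_zero.2 ENNReal.ofNat_ne_top) (ENNReal.inv_ne_top.2 two_ne_zero)]
    rw [this]; exact one_lt_top
  set c : ℕ → ℝ≥0 := fun n => 2 ^ (n + 1) with hcdef
  have hcm : Monotone c := fun m n hmn => pow_le_pow_right₀ one_le_two (by omega)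
  have hc : ∀ n, ∀ S : Set Ω, MeasurableSet S → P n S ≤ (c n : ℝ≥0∞) * μ S := by
    intro n S hS
    have h1 : (2 : ℝ≥0∞)⁻¹ ^ (n + 1) * P n S ≤ μ S := by
      rw [hμ, Measure.sum_apply _ hS]
      have := ENNReal.le_tsum (f := fun m => ((2 : ℝ≥0∞)⁻¹ ^ (m + 1) • P m) S) n
      simpa [Measure.smul_apply, smul_eq_mul] using this
    have h2 : ((c n : ℝ≥0∞)) * ((2 : ℝ≥0∞)⁻¹ ^ (n + 1)) = 1 := by
      rw [hcdef]
      push_cast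
      rw [← ENNReal.inv_pow, ENNReal.mul_inv_cancel (pow_ne_zero _ two_ne_zero) (ENNReal.pow_ne_top ENNReal.ofNat_ne_top)]
    calc P n S = (c n : ℝ≥0∞) * ((2 : ℝ≥0∞)⁻¹ ^ (n + 1) * P n S) := by
          rw [← mul_assoc, h2, one_mul]
      _ ≤ (c n : ℝ≥0∞) * μ S := mul_le_mul_right h1 _
  have hL1 : ∀ A : Set Ω, MeasurableSet A → L A ≤ 1 := fun A hA =>
    le_of_tendsto' (hlim A hA) fun n => prob_le_one
  have hLReal : ∀ A : Set Ω, MeasurableSet A →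
      Tendsto (fun n => (P n A).toReal) atTop (𝓝 (L A).toReal) := fun A hA =>
    (ENNReal.tendsto_toReal (lt_of_le_of_lt (hL1 A hA) one_lt_top).ne).comp (hlim A hA)
  have hconv : ∀ A : Set Ω, MeasurableSet A →
      ∃ l : ℝ, Tendsto (fun n => (P n A).toReal) atTop (𝓝 l) := fun A hA =>
    ⟨(L A).toReal, hLReal A hA⟩
  -- countable additivity of L
  have hadd : ∀ g : ℕ → Set Ω, (∀ i, MeasurableSet (g i)) → Pairwise (Function.onFun Disjoint g) →
      L (⋃ i, g i) = ∑' i, L (g i) := by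
    intro g hg hgd
    set R : ℕ → Set Ω := fun k => ⋃ i, ⋃ _ : k ≤ i, g i with hR
    have hRm : ∀ k, MeasurableSet (R k) := fun k =>
      .iUnion fun i => .iUnion fun _ => hg i
    have hRa : Antitone R := by
      intro k k' hkk' x hx
      simp only [hR, mem_iUnion] at hx ⊢
      obtain ⟨i, hi, hxi⟩ := hx
      exact ⟨i, le_trans hkk' hi, hxi⟩
    have hRI : ⋂ k, R k = ∅ := by
      ext x
      simp only [mem_iInter, mem_empty_iff_false, iff_false]
      intro h
      obtain ⟨i, _, hxi⟩ := by simpa only [hR, mem_iUnion] using h 0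
      obtain ⟨j, hj, hxj⟩ := by simpa only [hR, mem_iUnion] using h (i + 1)
      exact Set.disjoint_left.1 (hgd (by omega : i ≠ j)) hxi hxj
    have htendμ : Tendsto (fun k => μ (R k)) atTop (𝓝 0) := by
      have := tendsto_measure_iInter_atTop (μ := μ)
        (fun k => (hRm k).nullMeasurableSet) hRa ⟨0, measure_ne_top μ _⟩
      rwa [hRI, measure_empty] at this
    have hLR0 : Tendsto (fun k => L (R k)) atTop (𝓝 0) := by
      have hto : Tendsto (fun k => (L (R k)).toReal) atTop (𝓝 0) := by
        rw [NormedAddCommGroup.tendsto_nhds_zero]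
        intro ε hε
        obtain ⟨N, r, hr, hkey⟩ := VHSaux.uniform_small P hP μ c hcm hc hconv
          (show (0:ℝ) < ε / 5 by linarith)
        have ev1 : ∀ᶠ k in atTop, μ (R k) < r := htendμ.eventually_lt_const hr
        have ev2 : ∀ᶠ k in atTop, ((c N : ℝ≥0∞) * μ (R k)).toReal < ε / 5 := by
          have h1 : Tendsto (fun k => (c N : ℝ≥0∞) * μ (R k)) atTop (𝓝 0) := by
            have := ENNReal.Tendsto.const_mul (a := (c N : ℝ≥0∞)) htendμ
              (Or.inr ENNReal.coe_ne_top)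
            simpa using this
          have h2 : Tendsto (fun k => ((c N : ℝ≥0∞) * μ (R k)).toReal) atTop (𝓝 0) := by
            simpa [Function.comp_def] using
              (ENNReal.tendsto_toReal (by norm_num : (0:ℝ≥0∞) ≠ ⊤)).comp h1
          exact h2.eventually_lt_const (by linarith)
        filter_upwards [ev1, ev2] with k h1 h2
        have hb : ∀ n, (P n (R k)).toReal ≤ 3 * (ε / 5) := by
          intro n
          have := hkey (R k) (hRm k) h1 n
          linarith
        have : (L (R k)).toReal ≤ 3 * (ε / 5) :=
          le_of_tendsto' (hLReal (R k) (hRm k)) hb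
        rw [Real.norm_eq_abs, abs_of_nonneg ENNReal.toReal_nonneg]
        linarith
      have hiff := ENNReal.tendsto_toReal_iff (fi := atTop) (x := (0:ℝ≥0∞))
        (f := fun k => L (R k))
        (fun k => (lt_of_le_of_lt (hL1 (R k) (hRm k)) one_lt_top).ne)
        (by norm_num)
      exact hiff.1 (by simpa using hto)
    have key : ∀ k, L (⋃ i, g i) = (∑ i ∈ Finset.range k, L (g i)) + L (R k) := by
      intro k
      have hU : (⋃ i, g i) = (⋃ i ∈ Finset.range k, g i) ∪ R k := by
        ext x
        simp only [mem_iUnion, mem_union, Finset.mem_range, hR]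
        constructor
        · rintro ⟨i, hxi⟩
          rcases lt_or_ge i k with h | h
          · exact Or.inl ⟨i, h, hxi⟩
          · exact Or.inr ⟨i, h, hxi⟩
        · rintro (⟨i, _, hxi⟩ | ⟨i, _, hxi⟩) <;> exact ⟨i, hxi⟩
      have hd : Disjoint (⋃ i ∈ Finset.range k, g i) (R k) := by
        rw [Set.disjoint_left]
        rintro x hx hx'
        simp only [mem_iUnion, Finset.mem_range] at hx
        obtain ⟨i, hik, hxi⟩ := hx
        obtain ⟨j, hj, hxj⟩ := by simpa only [hR, mem_iUnion] using hx'
        exact Set.disjoint_left.1 (hgd (by omega : i ≠ j)) hxi hxj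
      have hPn : ∀ n, P n (⋃ i, g i)
          = (∑ i ∈ Finset.range k, P n (g i)) + P n (R k) := by
        intro n
        rw [hU, measure_union hd (hRm k),
          measure_biUnion_finset (fun i _ j _ hij => hgd hij) (fun i _ => hg i)]
      have t1 : Tendsto (fun n => P n (⋃ i, g i)) atTop
          (𝓝 ((∑ i ∈ Finset.range k, L (g i)) + L (R k))) := by
        have := Tendsto.add
          (tendsto_finset_sum (Finset.range k) fun i _ => hlim (g i) (hg i))
          (hlim (R k) (hRm k))
        simpa only [← hPn] using this
      exact tendsto_nhds_unique (hlim _ (.iUnion hg)) t1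
    have t2 : Tendsto (fun k => (∑ i ∈ Finset.range k, L (g i)) + L (R k)) atTop
        (𝓝 (∑' i, L (g i) + 0)) := (ENNReal.tendsto_nat_tsum _).add hLR0
    rw [show (fun k => (∑ i ∈ Finset.range k, L (g i)) + L (R k))
        = fun _ => L (⋃ i, g i) from funext fun k => (key k).symm] at t2
    rw [tendsto_nhds_unique tendsto_const_nhds t2, add_zero]
  have h0 : L ∅ = 0 :=
    tendsto_nhds_unique (hlim ∅ .empty) (by simpa using tendsto_const_nhds)
  refine ⟨Measure.ofMeasurable (fun A _ => L A) h0
    (fun g hg hgd => hadd g hg hgd), ?_, fun A hA => Measure.ofMeasurable_apply A hA⟩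
  constructor
  rw [Measure.ofMeasurable_apply _ MeasurableSet.univ]
  exact tendsto_nhds_unique (hlim Set.univ .univ) (by simpa using tendsto_const_nhds)
end
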